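/- If S is a feasible simplification of Sub(r), then the undirected graph on vertex set S whose edges are the pairs {v, w} with (v, w) ∈ E_s or (w, v) ∈ E_s is connected, and S contains the root r and every leaf of T. -/

import Mathlib

/-- `u` is a child of `w` in the rooted tree given by the parent function. -/
def ChildRel {V : Type*} (parent : V → Option V) (w u : V) : Prop :=
  parent u = some w

/-- `w` is a (weak) descendant of `v`. -/
def Descend {V : Type*} (parent : V → Option V) (v w : V) : Prop :=
  Relation.ReflTransGen (ChildRel parent) v w

/-- `w` is a strict descendant of `v`. -/
def StrictDescend {V : Type*} (parent : V → Option V) (v w : V) : Prop :=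
  Relation.TransGen (ChildRel parent) v w

/-- The vertex set `SubTree(v)` of the subtree rooted at `v`. -/
def SubTree {V : Type*} (parent : V → Option V) (v : V) : Set V :=
  {w | Descend parent v w}

/-- A leaf is a vertex with no children. -/
def IsLeaf {V : Type*} (parent : V → Option V) (v : V) : Prop :=
  ∀ u, parent u ≠ some v

/-- `T` is a finite rooted tree with root `r`: the root has no parent and every vertex is
a descendant of the root. -/
def IsRootedTree {V : Type*} (parent : V → Option V) (r : V) : Prop :=
  parent r = none ∧ ∀ v, Descend parent r v

/-- `x` lies on the tree path from `v` down to `u`. -/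
def OnPath {V : Type*} (parent : V → Option V) (v u x : V) : Prop :=
  Descend parent v x ∧ Descend parent x u

/-- `a` and `b` are consecutive elements of `S` along the tree path from `v` to `u`. -/
def Consecutive {V : Type*} (parent : V → Option V) (S : Set V) (v u a b : V) : Prop :=
  a ∈ S ∧ b ∈ S ∧ OnPath parent v u a ∧ OnPath parent v u b ∧
    StrictDescend parent a b ∧
    ¬ ∃ c ∈ S, OnPath parent v u c ∧ StrictDescend parent a c ∧ StrictDescend parent c b

/-- `S ⊆ SubTree(v)` is a feasible simplification of `SubTree(v)`: it contains `v` and every leaf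
of `SubTree(v)`, and for every leaf `u` of `SubTree(v)` every pair of consecutive elements of `S`
along the tree path from `v` to `u` is a shortcut of `Es`. -/
def Feasible {V : Type*} (parent : V → Option V) (Es : V → V → Prop) (v : V)
    (S : Set V) : Prop :=
  S ⊆ SubTree parent v ∧ v ∈ S ∧
  (∀ u ∈ SubTree parent v, IsLeaf parent u → u ∈ S) ∧
  (∀ u ∈ SubTree parent v, IsLeaf parent u →
    ∀ a b, Consecutive parent S v u a b → Es a b)

/-- `s(v)`: the minimum cardinality of a feasible simplification of `SubTree(v)`. -/
noncomputable def sVal {V : Type*} (parent : V → Option V) (Es : V → V → Prop)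
    (v : V) : ℕ :=
  sInf {k | ∃ S : Set V, Feasible parent Es v S ∧ S.ncard = k}

/-- The set `N(w)` of children of `w`. -/
def childrenOf {V : Type*} [Fintype V] [DecidableEq V] (parent : V → Option V)
    (w : V) : Finset V :=
  Finset.univ.filter (fun u => parent u = some w)

/-- The undirected shortcut graph: `a` and `b` are adjacent if they are distinct and
`(a, b)` or `(b, a)` is a shortcut. -/
def shortcutGraph {V : Type*} (Es : V → V → Prop) : SimpleGraph V where
  Adj a b := a ≠ b ∧ (Es a b ∨ Es b a)
  symm := ⟨fun a b hab => ⟨hab.1.symm, hab.2.symm⟩⟩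
  loopless := ⟨fun a ha => ha.1 rfl⟩


section Aux

variable {V : Type*} (parent : V → Option V) (r : V)

lemma acc_childRel (htree : IsRootedTree parent r) (v : V) :
    Acc (ChildRel parent) v := by
  have h := htree.2 v
  induction h with
  | refl =>
    exact ⟨r, fun a ha => absurd ha (by simp [ChildRel, htree.1])⟩
  | @tail b c _ hstep ih =>
    refine ⟨c, fun a ha => ?_⟩
    have : a = b := Option.some.inj (ha.symm.trans hstep)
    exact this ▸ ih

lemma wf_strictDescend (htree : IsRootedTree parent r) :
    WellFounded (StrictDescend parent) :=
  ⟨fun v => (acc_childRel parent r htree v).transGen⟩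

lemma wf_flip_strictDescend [Finite V] (htree : IsRootedTree parent r) :
    WellFounded (fun a b => StrictDescend parent b a) := by
  have h1 : IsIrrefl V (fun a b => StrictDescend parent b a) :=
    ⟨fun a h => (wf_strictDescend parent r htree).asymmetric _ _ h h⟩
  have h2 : IsTrans V (fun a b => StrictDescend parent b a) :=
    ⟨fun a b c h1 h2 => h2.trans h1⟩
  exact Finite.wellFounded_of_trans_of_irrefl _

lemma exists_leaf_below [Finite V] (htree : IsRootedTree parent r) (v : V) :
    ∃ u, Descend parent v u ∧ IsLeaf parent u := by
  induction v using (wf_flip_strictDescend parent r htree).induction with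
  | _ v ih =>
    by_cases h : IsLeaf parent v
    · exact ⟨v, .refl, h⟩
    · simp only [IsLeaf, not_forall, not_not] at h
      obtain ⟨c, hc⟩ := h
      obtain ⟨u, hu, hl⟩ := ih c (Relation.TransGen.single hc)
      exact ⟨u, .head hc hu, hl⟩

end Aux

/-- Every feasible simplification `S` of `Sub(r)` is a feasible solution of the graph
problem PTBS: `S` contains the root and every leaf of `T`, and the subgraph of the
shortcut graph induced on `S` is connected. -/
theorem feasible_gives_ptbs_solution {V : Type*} [Fintype V] [DecidableEq V]
    (parent : V → Option V) (r : V) (Es : V → V → Prop)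
    (htree : IsRootedTree parent r)
    (hEsDesc : ∀ a b, Es a b → StrictDescend parent a b)
    (hEsParent : ∀ w u, parent u = some w → Es w u)
    (S : Set V) (hS : Feasible parent Es r S) :
    r ∈ S ∧ (∀ u, IsLeaf parent u → u ∈ S) ∧
      ((shortcutGraph Es).induce S).Connected := by
  obtain ⟨hsub, hrS, hleafmem, hcons⟩ := hS
  refine ⟨hrS, fun u hu => hleafmem u (htree.2 u) hu, ?_⟩
  have wfs := wf_strictDescend parent r htree
  have wff := wf_flip_strictDescend parent r htree
  have key : ∀ v (hv : v ∈ S),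
      ((shortcutGraph Es).induce S).Reachable ⟨v, hv⟩ ⟨r, hrS⟩ := by
    intro v
    induction v using wfs.induction with
    | _ v ih =>
      intro hv
      by_cases hvr : v = r
      · subst hvr; exact SimpleGraph.Reachable.refl _
      · obtain ⟨u, hvu, hul⟩ := exists_leaf_below parent r htree v
        have hrv : Descend parent r v := htree.2 v
        have hru : Descend parent r u := hrv.trans hvu
        have hrvS : StrictDescend parent r v := by
          rcases hrv.cases_head with h | ⟨c, hc, hcv⟩
          · exact absurd h.symm hvr
          · exact Relation.TransGen.head' hc hcv
        set A : Set V :=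
          {c | c ∈ S ∧ OnPath parent r u c ∧ StrictDescend parent c v} with hA
        have hrA : r ∈ A := ⟨hrS, ⟨Relation.ReflTransGen.refl, hru⟩, hrvS⟩
        obtain ⟨a, haA, hamax⟩ := wff.has_min A ⟨r, hrA⟩
        have hEs : Es a v := by
          refine hcons u hru hul a v
            ⟨haA.1, hv, haA.2.1, ⟨hrv, hvu⟩, haA.2.2, ?_⟩
          rintro ⟨c, hcS, hcp, hac, hcv⟩
          exact hamax c ⟨hcS, hcp, hcv⟩ hac
        have hav : a ≠ v := by
          intro h; subst h; exact wfs.asymmetric _ _ haA.2.2 haA.2.2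
        have hadj : ((shortcutGraph Es).induce S).Adj ⟨v, hv⟩ ⟨a, haA.1⟩ :=
          show v ≠ a ∧ (Es v a ∨ Es a v) from ⟨fun h => hav h.symm, Or.inr hEs⟩
        exact hadj.reachable.trans (ih a haA.2.2 haA.1)
  have hne : Nonempty ↑S := ⟨⟨r, hrS⟩⟩
  exact ⟨fun x y => (key x.1 x.2).trans (key y.1 y.2).symm⟩
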